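/- Successor isomorphism: Let A be a uniform chain of rank strictly between ω and ω·2, and let x, x' ∈ A. If both the ω-components of x and x' are n-successors in the quotient A/ω for some n < rk(A/ω) < ω, then the ω-component of x is order-isomorphic to the ω-component of x'. -/

import Mathlib

/-- All tails of `M` are isomorphic to all tails of `N`. -/
def TailsIso (M N : LinOrd) : Prop :=
  ∀ (x : M) (y : N), Nonempty ({z : M // x ≤ z} ≃o {z : N // y ≤ z})

/-- A chain is uniform if all of its tails are pairwise order-isomorphic. -/
def IsUniform (M : LinOrd) : Prop := TailsIso M M

/-- Component relations over a base equivalence: `compFrom C base 0 = base`, and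
`compFrom C base (n+1) x y` iff finitely many `compFrom C base n`-classes meet the
interval `[x, y]`.  With `base = Eq` this is the finite-level rank decomposition;
with `base` the `ω`-component relation it describes the quotient `A/ω`. -/
def compFrom (C : LinOrd) (base : C → C → Prop) : ℕ → C → C → Prop
  | 0 => base
  | n + 1 => fun x y => ∃ F : Finset C, ∀ z ∈ Set.uIcc x y, ∃ w ∈ F, compFrom C base n z w

/-- The `ω`-component relation: finitely many jumps apart at some finite level. -/
def compOmega (C : LinOrd) (x y : C) : Prop := ∃ n, compFrom C Eq n x y

/-- Relative to the base equivalence (level `0` of `A/ω`), the level-`n` class of `x`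
has an immediate predecessor inside its level-`(n+1)` class. -/
def HasPredFrom (C : LinOrd) (base : C → C → Prop) (n : ℕ) (x : C) : Prop :=
  ∃ y, y < x ∧ compFrom C base (n + 1) x y ∧ ¬ compFrom C base n x y ∧
    ∀ z, y < z → z < x → compFrom C base n z x ∨ compFrom C base n z y

/-- The `base`-class of `x` is an `n`-successor in the quotient by `base`. -/
def IsNSuccFrom (C : LinOrd) (base : C → C → Prop) (n : ℕ) (x : C) : Prop :=
  HasPredFrom C base n x ∧ ∀ m, m < n → ¬ HasPredFrom C base m x


section Aux

variable {α : Type*} [LinearOrder α]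

/-- Unbundled version of `compFrom`. -/
def cf (base : α → α → Prop) : ℕ → α → α → Prop
  | 0 => base
  | n + 1 => fun x y => ∃ F : Finset α, ∀ z ∈ Set.uIcc x y, ∃ w ∈ F, cf base n z w

/-- A convex equivalence relation. -/
structure GoodBase (base : α → α → Prop) : Prop where
  refl : ∀ a, base a a
  symm : ∀ {a b}, base a b → base b a
  trans : ∀ {a b c}, base a b → base b c → base a c
  convex : ∀ {a b c}, base a b → a ≤ c → c ≤ b → base a c

variable {base : α → α → Prop}

theorem cf_refl (hb : GoodBase base) : ∀ n (a : α), cf base n a a := by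
  intro n a
  cases n with
  | zero => exact hb.refl a
  | succ n =>
    refine ⟨{a}, fun z hz => ⟨a, Finset.mem_singleton_self a, ?_⟩⟩
    rw [Set.uIcc_self, Set.mem_singleton_iff] at hz
    subst hz; exact cf_refl hb n z

theorem cf_symm (hb : GoodBase base) : ∀ {n} {a b : α}, cf base n a b → cf base n b a := by
  intro n a b h
  cases n with
  | zero => exact hb.symm h
  | succ n =>
    obtain ⟨F, hF⟩ := h
    exact ⟨F, fun z hz => hF z (by rw [Set.mem_uIcc] at hz ⊢; tauto)⟩

theorem cf_trans (hb : GoodBase base) :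
    ∀ {n} {a b c : α}, cf base n a b → cf base n b c → cf base n a c := by
  intro n a b c h1 h2
  cases n with
  | zero => exact hb.trans h1 h2
  | succ n =>
    obtain ⟨F1, hF1⟩ := h1
    obtain ⟨F2, hF2⟩ := h2
    refine ⟨F1 ∪ F2, fun z hz => ?_⟩
    rcases Set.uIcc_subset_uIcc_union_uIcc hz with hz1 | hz2
    · obtain ⟨w, hw, hr⟩ := hF1 z hz1
      exact ⟨w, Finset.mem_union_left _ hw, hr⟩
    · obtain ⟨w, hw, hr⟩ := hF2 z hz2
      exact ⟨w, Finset.mem_union_right _ hw, hr⟩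

theorem cf_convex (hb : GoodBase base) :
    ∀ {n} {a b c : α}, cf base n a b → a ≤ c → c ≤ b → cf base n a c := by
  intro n a b c h hac hcb
  cases n with
  | zero => exact hb.convex h hac hcb
  | succ n =>
    obtain ⟨F, hF⟩ := h
    refine ⟨F, fun z hz => hF z (Set.uIcc_subset_uIcc Set.left_mem_uIcc
      (Set.mem_uIcc.2 (Or.inl ⟨hac, hcb⟩)) hz)⟩

theorem cf_good (hb : GoodBase base) (n : ℕ) : GoodBase (cf base n) :=
  ⟨cf_refl hb n, cf_symm hb, cf_trans hb, cf_convex hb⟩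

theorem cf_succ_mono (hb : GoodBase base) {n : ℕ} {a b : α}
    (h : cf base n a b) : cf base (n + 1) a b := by
  refine ⟨{b}, fun z hz => ⟨b, Finset.mem_singleton_self b, ?_⟩⟩
  rcases Set.mem_uIcc.1 hz with ⟨h1, h2⟩ | ⟨h1, h2⟩
  · exact cf_trans hb (cf_symm hb (cf_convex hb h h1 h2)) h
  · exact cf_symm hb (cf_convex hb (cf_symm hb h) h1 h2)

theorem cf_mono (hb : GoodBase base) {m n : ℕ} (hmn : m ≤ n) {a b : α}
    (h : cf base m a b) : cf base n a b := by
  induction n with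
  | zero => rwa [Nat.le_zero.1 hmn] at h
  | succ n ih =>
    rcases Nat.eq_or_lt_of_le hmn with h' | h'
    · rwa [h'] at h
    · exact cf_succ_mono hb (ih (Nat.lt_succ_iff.1 h'))

theorem goodEq : GoodBase (Eq : α → α → Prop) :=
  ⟨fun _ => rfl, Eq.symm, Eq.trans, fun h h1 h2 => le_antisymm h1 (h ▸ h2)⟩

/-- The unbundled ω-component relation. -/
def cw (x y : α) : Prop := ∃ n, cf Eq n x y

theorem goodCw : GoodBase (cw : α → α → Prop) where
  refl a := ⟨0, rfl⟩
  symm h := h.elim fun n hn => ⟨n, cf_symm goodEq hn⟩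
  trans h1 h2 := by
    obtain ⟨n, hn⟩ := h1; obtain ⟨m, hm⟩ := h2
    exact ⟨max n m, cf_trans goodEq (cf_mono goodEq (le_max_left n m) hn)
      (cf_mono goodEq (le_max_right n m) hm)⟩
  convex h h1 h2 := h.elim fun n hn => ⟨n, cf_convex goodEq hn h1 h2⟩

/-- Separation: distinct convex classes are fully ordered. -/
theorem sep (hb : GoodBase base) {a b a' b' : α} (hab : a < b) (hnab : ¬ base a b)
    (ha : base a' a) (hb' : base b' b) : a' < b' := by
  by_contra hle
  push_neg at hle
  rcases le_or_gt b' a with h1 | h1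
  · exact hnab (hb.trans (hb.symm (hb.convex hb' h1 hab.le)) hb')
  · exact hnab (hb.trans (hb.convex (hb.symm ha) h1.le hle) hb')

end Aux
section Aux2

variable {α β : Type*} [LinearOrder α] [LinearOrder β] {base : α → α → Prop}

theorem uIcc_subtype {a : α} {u v z : {z : α // a ≤ z}} :
    z ∈ Set.uIcc u v ↔ z.val ∈ Set.uIcc u.val v.val := by
  simp only [Set.mem_uIcc]
  exact Set.mem_uIcc.trans Iff.rfl

/-- Restriction: the relations computed inside a tail agree with the global ones. -/
theorem cf_subtype (hb : GoodBase base) (a : α) :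
    ∀ (n : ℕ) (u v : {z : α // a ≤ z}),
      cf (fun p q : {z : α // a ≤ z} => base p.val q.val) n u v ↔ cf base n u.val v.val := by
  intro n
  induction n with
  | zero => intro u v; exact Iff.rfl
  | succ n ih =>
    intro u v
    constructor
    · rintro ⟨F, hF⟩
      refine ⟨F.image Subtype.val, fun z hz => ?_⟩
      have haz : a ≤ z := by
        rcases Set.mem_uIcc.1 hz with ⟨h1, _⟩ | ⟨h1, _⟩
        · exact le_trans u.2 h1
        · exact le_trans v.2 h1
      obtain ⟨w, hw, hr⟩ := hF ⟨z, haz⟩ (uIcc_subtype.2 hz)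
      exact ⟨w.val, Finset.mem_image_of_mem _ hw, (ih ⟨z, haz⟩ w).1 hr⟩
    · rintro ⟨F, hF⟩
      classical
      set pick : α → {z : α // a ≤ z} := fun w =>
        if h : ∃ p : {z : α // a ≤ z}, cf base n p.val w then h.choose else u with hpick
      refine ⟨F.image pick, fun p hp => ?_⟩
      obtain ⟨w, hw, hr⟩ := hF p.val (uIcc_subtype.1 hp)
      have hex : ∃ q : {z : α // a ≤ z}, cf base n q.val w := ⟨p, hr⟩
      refine ⟨pick w, Finset.mem_image_of_mem _ hw, ?_⟩
      have hq : cf base n (pick w).val w := by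
        rw [hpick]; simp only [hex, dif_pos]; exact hex.choose_spec
      exact (ih p (pick w)).2 ((cf_good hb n).trans hr ((cf_good hb n).symm hq))

/-- One-directional transport of `cf` along an order isomorphism. -/
theorem cf_map (e : α ≃o β) {b1 : α → α → Prop} {b2 : β → β → Prop}
    (h : ∀ u v, b1 u v → b2 (e u) (e v)) :
    ∀ (n : ℕ) (u v : α), cf b1 n u v → cf b2 n (e u) (e v) := by
  intro n
  induction n with
  | zero => exact h
  | succ n ih =>
    rintro u v ⟨F, hF⟩
    refine ⟨F.image e, fun z hz => ?_⟩
    have hz' : e.symm z ∈ Set.uIcc u v := by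
      rw [Set.mem_uIcc] at hz ⊢
      rcases hz with ⟨h1, h2⟩ | ⟨h1, h2⟩
      · exact Or.inl ⟨by simpa using e.le_iff_le.1 (by simpa using h1),
          by simpa using e.le_iff_le.1 (by simpa using h2)⟩
      · exact Or.inr ⟨by simpa using e.le_iff_le.1 (by simpa using h1),
          by simpa using e.le_iff_le.1 (by simpa using h2)⟩
    obtain ⟨w, hw, hr⟩ := hF (e.symm z) hz'
    refine ⟨e w, Finset.mem_image_of_mem _ hw, ?_⟩
    have := ih (e.symm z) w hr
    simpa using this

end Aux2
section Aux3

variable {α : Type*} [LinearOrder α] {base : α → α → Prop}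

/-- Unbundled `HasPredFrom`. -/
def hp (base : α → α → Prop) (n : ℕ) (x : α) : Prop :=
  ∃ y, y < x ∧ cf base (n + 1) x y ∧ ¬ cf base n x y ∧
    ∀ z, y < z → z < x → cf base n z x ∨ cf base n z y

/-- If `x` has no `m`-predecessor, its `m`-class is leftmost in its `(m+1)`-class. -/
theorem no_pred_min (hb : GoodBase base) {m : ℕ} {x : α} (hnp : ¬ hp base m x)
    {z : α} (hzx : z < x) (h1 : cf base (m + 1) x z) : cf base m x z := by
  classical
  by_contra h2
  obtain ⟨F, hF⟩ := id h1
  set T : Finset α := F.filter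
    (fun w => ∃ u, u ∈ Set.uIcc x z ∧ ¬ cf base m u x ∧ cf base m u w) with hT
  have hne : T.Nonempty := by
    obtain ⟨w, hw, hr⟩ := hF z Set.right_mem_uIcc
    exact ⟨w, Finset.mem_filter.2 ⟨hw, z, Set.right_mem_uIcc,
      fun hc => h2 (cf_symm hb hc), hr⟩⟩
  set w₀ := T.max' hne with hw₀
  obtain ⟨hw₀F, u₀, hu₀I, hu₀x, hu₀w⟩ := Finset.mem_filter.1 (T.max'_mem hne)
  have hu₀ : z ≤ u₀ ∧ u₀ ≤ x := by
    rcases Set.mem_uIcc.1 hu₀I with ⟨ha, hbb⟩ | ⟨ha, hbb⟩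
    · exact absurd (le_trans ha hbb) (not_le.2 hzx)
    · exact ⟨ha, hbb⟩
  have hu₀x' : u₀ < x := lt_of_le_of_ne hu₀.2 (fun h => hu₀x (h ▸ cf_refl hb m u₀))
  apply hnp
  refine ⟨u₀, hu₀x', ?_, fun h => hu₀x (cf_symm hb h), ?_⟩
  · exact cf_trans hb h1 (cf_convex hb (cf_symm hb h1) hu₀.1 hu₀.2)
  · intro v hv1 hv2
    by_cases hvx : cf base m v x
    · exact Or.inl hvx
    · obtain ⟨w₁, hw₁, hrv⟩ := hF v (Set.mem_uIcc.2 (Or.inr ⟨le_trans hu₀.1 hv1.le, hv2.le⟩))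
      have hw₁T : w₁ ∈ T := Finset.mem_filter.2 ⟨hw₁, v,
        Set.mem_uIcc.2 (Or.inr ⟨le_trans hu₀.1 hv1.le, hv2.le⟩), hvx, hrv⟩
      have hle : w₁ ≤ w₀ := T.le_max' w₁ hw₁T
      by_contra hvu
      have : ¬ cf base m u₀ v := fun h => hvu (Or.inr (cf_symm hb h))
      exact absurd (sep (cf_good hb m) hv1 this (cf_symm hb hu₀w) (cf_symm hb hrv))
        (not_lt.2 hle)

/-- Descent: with no `m`-predecessors below `n`, `n`-relatedness below gives `base`. -/
theorem descent (hb : GoodBase base) :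
    ∀ (n : ℕ) (x : α), (∀ m, m < n → ¬ hp base m x) →
      ∀ z, z < x → cf base n x z → base x z := by
  intro n
  induction n with
  | zero => exact fun x _ z _ h => h
  | succ n ih =>
    intro x hnp z hzx hcf
    exact ih x (fun m hm => hnp m (hm.trans n.lt_succ_self)) z hzx
      (no_pred_min hb (hnp n n.lt_succ_self) hzx hcf)

end Aux3

section Bridge

theorem compFrom_eq (C : LinOrd) (base : C → C → Prop) :
    ∀ n, compFrom C base n = cf base n := by
  intro n
  induction n with
  | zero => rfl
  | succ n ih => funext x y; simp only [compFrom, cf, ih]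

theorem compOmega_eq (C : LinOrd) : compOmega C = (cw : C → C → Prop) := by
  funext x y; simp only [compOmega, cw, compFrom_eq]

theorem hasPred_eq (C : LinOrd) :
    HasPredFrom C (compOmega C) = fun n x => hp cw n x := by
  funext n x; simp only [HasPredFrom, hp, compOmega_eq, compFrom_eq]

end Bridge

theorem successor_isomorphism (A : LinOrd) (hA : IsUniform A)
    (hrk_gt : ∃ x y : A, ¬ compOmega A x y)
    (hrk_lt : {m : ℕ | ∀ x y : A, compFrom A (compOmega A) m x y}.Nonempty)
    (n : ℕ) (hn : n < sInf {m : ℕ | ∀ x y : A, compFrom A (compOmega A) m x y})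
    (x x' : A)
    (hx : IsNSuccFrom A (compOmega A) n x) (hx' : IsNSuccFrom A (compOmega A) n x') :
    Nonempty ({y : A // compOmega A x y} ≃o {y : A // compOmega A x' y}) := by
  rw [compOmega_eq A]
  -- bridge the hypotheses to `cf`/`cw` language
  have hx1 : hp cw n x := by have := hx.1; rwa [hasPred_eq] at this
  have hxnp : ∀ m, m < n → ¬ hp cw m x := by
    have h2 := hx.2; rw [hasPred_eq] at h2; exact h2
  have hx1' : hp cw n x' := by have := hx'.1; rwa [hasPred_eq] at this
  have hxnp' : ∀ m, m < n → ¬ hp cw m x' := by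
    have h2 := hx'.2; rw [hasPred_eq] at h2; exact h2
  obtain ⟨y, hyx, hy1, hyn, hybet⟩ := hx1
  obtain ⟨y', hyx', hy1', hyn', hybet'⟩ := hx1'
  -- the tail isomorphism from uniformity
  obtain ⟨g⟩ := hA y y'
  -- transfer of `Eq`-levels along `g`
  have mapEq : ∀ (k : ℕ) (u v : {z : A // y ≤ z}),
      cf (fun p q : {z : A // y ≤ z} => p.val = q.val) k u v →
      cf (fun p q : {z : A // y' ≤ z} => p.val = q.val) k (g u) (g v) :=
    cf_map g (fun u v h => congrArg Subtype.val (congrArg g (Subtype.ext h)))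
  have mapEq' : ∀ (k : ℕ) (u v : {z : A // y' ≤ z}),
      cf (fun p q : {z : A // y' ≤ z} => p.val = q.val) k u v →
      cf (fun p q : {z : A // y ≤ z} => p.val = q.val) k (g.symm u) (g.symm v) :=
    cf_map g.symm (fun u v h => congrArg Subtype.val (congrArg g.symm (Subtype.ext h)))
  have trEq : ∀ (k : ℕ) (u v : {z : A // y ≤ z}),
      cf Eq k u.val v.val ↔ cf Eq k (g u).val (g v).val := by
    intro k u v
    constructor
    · intro h
      exact (cf_subtype goodEq y' k (g u) (g v)).1
        (mapEq k u v ((cf_subtype goodEq y k u v).2 h))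
    · intro h
      have := mapEq' k (g u) (g v) ((cf_subtype goodEq y' k (g u) (g v)).2 h)
      simp only [OrderIso.symm_apply_apply] at this
      exact (cf_subtype goodEq y k u v).1 this
  have trW : ∀ (u v : {z : A // y ≤ z}), cw u.val v.val ↔ cw (g u).val (g v).val :=
    fun u v => exists_congr fun k => trEq k u v
  -- transfer of the `cw`-levels along `g`
  have mapW : ∀ (k : ℕ) (u v : {z : A // y ≤ z}),
      cf (fun p q : {z : A // y ≤ z} => cw p.val q.val) k u v →
      cf (fun p q : {z : A // y' ≤ z} => cw p.val q.val) k (g u) (g v) :=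
    cf_map g (fun u v h => (trW u v).1 h)
  have mapW' : ∀ (k : ℕ) (u v : {z : A // y' ≤ z}),
      cf (fun p q : {z : A // y' ≤ z} => cw p.val q.val) k u v →
      cf (fun p q : {z : A // y ≤ z} => cw p.val q.val) k (g.symm u) (g.symm v) := by
    refine cf_map g.symm (fun u v h => ?_)
    have := trW (g.symm u) (g.symm v)
    simp only [OrderIso.apply_symm_apply] at this
    exact this.2 h
  have trR : ∀ (k : ℕ) (u v : {z : A // y ≤ z}),
      cf cw k u.val v.val ↔ cf cw k (g u).val (g v).val := by
    intro k u v
    constructor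
    · intro h
      exact (cf_subtype goodCw y' k (g u) (g v)).1
        (mapW k u v ((cf_subtype goodCw y k u v).2 h))
    · intro h
      have := mapW' k (g u) (g v) ((cf_subtype goodCw y' k (g u) (g v)).2 h)
      simp only [OrderIso.symm_apply_apply] at this
      exact (cf_subtype goodCw y k u v).1 this
  -- the bottom of the tail is mapped to the bottom
  have gy : (g ⟨y, le_refl y⟩).val = y' := by
    refine le_antisymm ?_ (g ⟨y, le_refl y⟩).2
    have h1 : (⟨y, le_refl y⟩ : {z : A // y ≤ z}) ≤ g.symm ⟨y', le_refl y'⟩ :=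
      Subtype.mk_le_mk.2 (g.symm ⟨y', le_refl y'⟩).2
    have h2 := g.monotone h1
    rw [OrderIso.apply_symm_apply] at h2
    exact Subtype.coe_le_coe.2 h2
  set xT : {z : A // y ≤ z} := ⟨x, hyx.le⟩ with hxT
  set x₁ : A := (g xT).val with hx₁
  -- basic facts about x₁
  have hyx₁ : y' < x₁ := by
    have h1 : (⟨y, le_refl y⟩ : {z : A // y ≤ z}) < xT := Subtype.mk_lt_mk.2 hyx
    have h2 := g.strictMono h1
    rw [← gy]
    exact Subtype.coe_lt_coe.2 h2
  have hRn₁ : ¬ cf cw n x₁ y' := by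
    rw [← gy]
    intro h
    exact hyn ((trR n xT ⟨y, le_refl y⟩).2 h)
  have hy1₁ : cf cw (n + 1) x₁ y' := by
    rw [← gy]; exact (trR (n + 1) xT ⟨y, le_refl y⟩).1 hy1
  have hbet₁ : ∀ z, y' < z → z < x₁ → cf cw n z x₁ ∨ cf cw n z y' := by
    intro z h1 h2
    set zT' : {z : A // y' ≤ z} := ⟨z, h1.le⟩ with hzT'
    set w : {z : A // y ≤ z} := g.symm zT' with hw
    have hgw : g w = zT' := g.apply_symm_apply zT'
    have hw1 : y < w.val := by
      have : g ⟨y, le_refl y⟩ < zT' := Subtype.coe_lt_coe.1 (by rw [gy]; exact h1)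
      have := g.symm.strictMono this
      rw [OrderIso.symm_apply_apply] at this
      exact Subtype.coe_lt_coe.2 this
    have hw2 : w.val < x := by
      have : zT' < g xT := Subtype.coe_lt_coe.1 h2
      have := g.symm.strictMono this
      rw [OrderIso.symm_apply_apply] at this
      exact Subtype.coe_lt_coe.2 this
    rcases hybet w.val hw1 hw2 with h | h
    · left
      have := (trR n w xT).1 h
      rwa [hgw] at this
    · right
      have := (trR n w ⟨y, le_refl y⟩).1 h
      rwa [hgw, gy] at this
  -- x₁ has no m-predecessors for m < n
  have hx₁np : ∀ m, m < n → ¬ hp cw m x₁ := by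
    rintro m hm ⟨w, hw1, hw2, hw3, hw4⟩
    have hwn : cf cw n x₁ w := cf_mono goodCw (Nat.succ_le_of_lt hm) hw2
    have hy'w : y' < w := by
      by_contra hc
      push_neg at hc
      exact hRn₁ (cf_trans goodCw hwn
        (cf_convex goodCw (cf_symm goodCw hwn) hc hyx₁.le))
    set wT' : {z : A // y' ≤ z} := ⟨w, hy'w.le⟩ with hwT'
    set wA : {z : A // y ≤ z} := g.symm wT' with hwA
    have hgwA : g wA = wT' := g.apply_symm_apply wT'
    apply hxnp m hm
    have hwAx : wA < xT := by
      have : wT' < g xT := Subtype.coe_lt_coe.1 hw1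
      have := g.symm.strictMono this
      rwa [OrderIso.symm_apply_apply] at this
    refine ⟨wA.val, Subtype.coe_lt_coe.2 hwAx, ?_, ?_, ?_⟩
    · refine (trR (m + 1) xT wA).2 ?_
      rwa [hgwA]
    · intro hc
      have h5 := (trR m xT wA).1 hc
      rw [hgwA] at h5
      exact hw3 h5
    · intro z hz1 hz2
      set zT : {z : A // y ≤ z} := ⟨z, le_trans wA.2 hz1.le⟩ with hzT
      have hz1' : w < (g zT).val := by
        have : wA < zT := Subtype.mk_lt_mk.2 hz1
        have := g.strictMono this
        rw [hgwA] at this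
        exact Subtype.coe_lt_coe.2 this
      have hz2' : (g zT).val < x₁ := by
        have : zT < xT := Subtype.mk_lt_mk.2 hz2
        exact Subtype.coe_lt_coe.2 (g.strictMono this)
      rcases hw4 (g zT).val hz1' hz2' with h | h
      · exact Or.inl ((trR m zT xT).2 h)
      · refine Or.inr ((trR m zT wA).2 ?_)
        rwa [hgwA]
  -- x₁ and x' are in the same ω-component
  have hcc : cw x₁ x' := by
    rcases lt_trichotomy x₁ x' with h | h | h
    · have h1 : cf cw n x₁ x' := (hybet' x₁ hyx₁ h).resolve_right hRn₁
      exact goodCw.symm (descent goodCw n x' hxnp' x₁ h (cf_symm goodCw h1))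
    · exact h ▸ goodCw.refl x₁
    · have h1 : cf cw n x' x₁ := (hbet₁ x' hyx' h).resolve_right hyn'
      exact descent goodCw n x₁ hx₁np x' h (cf_symm goodCw h1)
  -- the restriction of g to the ω-component of x
  have hcwxy : ¬ cw x y := fun h => hyn (cf_mono goodCw (Nat.zero_le n) h)
  have hcwx₁y' : ¬ cw x₁ y' := fun h => hRn₁ (cf_mono goodCw (Nat.zero_le n) h)
  have memT : ∀ z : A, cw x z → y < z := fun z h =>
    sep goodCw hyx (fun hc => hcwxy (goodCw.symm hc)) (goodCw.refl y) (goodCw.symm h)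
  have memT' : ∀ z : A, cw x₁ z → y' < z := fun z h =>
    sep goodCw hyx₁ (fun hc => hcwx₁y' (goodCw.symm hc)) (goodCw.refl y') (goodCw.symm h)
  have e₁ : {z : A // cw x z} ≃o {z : A // cw x₁ z} :=
    { toFun := fun z => ⟨(g ⟨z.val, (memT z.val z.2).le⟩).val,
        (trW xT ⟨z.val, (memT z.val z.2).le⟩).1 z.2⟩
      invFun := fun z => ⟨(g.symm ⟨z.val, (memT' z.val z.2).le⟩).val, by
        have h := (trW xT (g.symm ⟨z.val, (memT' z.val z.2).le⟩))
        rw [OrderIso.apply_symm_apply] at h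
        exact h.2 z.2⟩
      left_inv := fun z => by
        apply Subtype.ext
        show (g.symm ⟨(g ⟨z.val, _⟩).val, _⟩).val = z.val
        rw [show (⟨(g ⟨z.val, (memT z.val z.2).le⟩).val, _⟩ : {z : A // y' ≤ z})
          = g ⟨z.val, (memT z.val z.2).le⟩ from rfl, OrderIso.symm_apply_apply]
      right_inv := fun z => by
        apply Subtype.ext
        show (g ⟨(g.symm ⟨z.val, _⟩).val, _⟩).val = z.val
        rw [show (⟨(g.symm ⟨z.val, (memT' z.val z.2).le⟩).val, _⟩ : {z : A // y ≤ z})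
          = g.symm ⟨z.val, (memT' z.val z.2).le⟩ from rfl, OrderIso.apply_symm_apply]
      map_rel_iff' := by
        intro a b
        show (g ⟨a.val, _⟩).val ≤ (g ⟨b.val, _⟩).val ↔ a ≤ b
        rw [Subtype.coe_le_coe, g.le_iff_le, Subtype.mk_le_mk]
        exact Iff.rfl }
  have hiff : ∀ z : A, cw x₁ z ↔ cw x' z := fun z =>
    ⟨fun h => goodCw.trans (goodCw.symm hcc) h, fun h => goodCw.trans hcc h⟩
  have e₂ : {z : A // cw x₁ z} ≃o {z : A // cw x' z} :=
    { toFun := fun z => ⟨z.val, (hiff z.val).1 z.2⟩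
      invFun := fun z => ⟨z.val, (hiff z.val).2 z.2⟩
      left_inv := fun z => rfl
      right_inv := fun z => rfl
      map_rel_iff' := Iff.rfl }
  exact ⟨e₁.trans e₂⟩
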